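/- Let λ₂,…,λ_n > 0, α > 0, let Λ = diag(λ₂,…,λ_n), and let W ∈ ℝ^{n×n} be symmetric. Define for i,j with at least one index > 1: χ_{i,j} = (λ_i − λ_j)² + 2α²(λ_i + λ_j) (with λ₁ = 0), and ρ_i = 2α² + λ_i. Then the matrices S, G, R with entries s_{i,1} = ρ_{i+1}^{-1} W_{i+1,1} (1 ≤ i ≤ n−1), s_{i−1,j} = ((λ_i − λ_j)/χ_{i,j}) W_{i,j} (2 ≤ i,j ≤ n), g_{i−1,j−1} = (2α/χ_{i,j}) W_{i,j} (2 ≤ i,j ≤ n), r_{1,1} = W_{1,1}/(2α), r_{i,j} = (α(λ_i+λ_j)/χ_{i,j}) W_{i,j} ((i,j) ≠ (1,1)) satisfy the three coupled equations: S A₂₂ᵀ + A₂₂ Sᵀ = 0; G A₂₃ᵀ + S A₂₄ᵀ + A₂₂ R = 0; Sᵀ A₂₃ᵀ + R A₂₄ᵀ + A₂₃ S + A₂₄ R = −W, where A₂₂ = [0 I_{n−1}], A₂₃ᵀ = [0 −Λ], A₂₄ = −α I_n. -/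
import Mathlib


open Matrix

/-- Explicit solution of the reduced Lyapunov equations for the linearized swing dynamics
with uniform damping-inertia ratio `α`: the matrices `S`, `G`, `R` with the stated entries
satisfy the three coupled block equations. -/
theorem stmt_6 (n : ℕ) (α : ℝ) (hα : 0 < α)
    (lam : Fin (n + 1) → ℝ) (hlam0 : lam 0 = 0)
    (hlam : ∀ i : Fin (n + 1), i ≠ 0 → 0 < lam i)
    (W : Matrix (Fin (n + 1)) (Fin (n + 1)) ℝ) (hW : W.IsSymm) :
    let χ : Fin (n + 1) → Fin (n + 1) → ℝ :=
      fun i j => (lam i - lam j) ^ 2 + 2 * α ^ 2 * (lam i + lam j)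
    let ρ : Fin (n + 1) → ℝ := fun i => 2 * α ^ 2 + lam i
    let S : Matrix (Fin n) (Fin (n + 1)) ℝ :=
      Matrix.of fun i j =>
        if j = 0 then (ρ i.succ)⁻¹ * W i.succ 0
        else ((lam i.succ - lam j) / χ i.succ j) * W i.succ j
    let G : Matrix (Fin n) (Fin n) ℝ :=
      Matrix.of fun i j => (2 * α / χ i.succ j.succ) * W i.succ j.succ
    let R : Matrix (Fin (n + 1)) (Fin (n + 1)) ℝ :=
      Matrix.of fun i j =>
        if i = 0 ∧ j = 0 then W 0 0 / (2 * α)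
        else (α * (lam i + lam j) / χ i j) * W i j
    let A22 : Matrix (Fin n) (Fin (n + 1)) ℝ :=
      Matrix.of fun i j => if j = i.succ then 1 else 0
    let A23 : Matrix (Fin (n + 1)) (Fin n) ℝ :=
      Matrix.of fun j i => if j = i.succ then -lam j else 0
    let A24 : Matrix (Fin (n + 1)) (Fin (n + 1)) ℝ := (-α) • (1 : Matrix (Fin (n + 1)) (Fin (n + 1)) ℝ)
    S * A22ᵀ + A22 * Sᵀ = 0 ∧
    G * A23ᵀ + S * A24ᵀ + A22 * R = 0 ∧
    Sᵀ * A23ᵀ + R * A24ᵀ + A23 * S + A24 * R = -W := by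
  intro χ ρ S G R A22 A23 A24
  have hWs : ∀ i j, W j i = W i j := fun i j => hW.apply i j
  have hlam_nn : ∀ i : Fin (n + 1), 0 ≤ lam i := by
    intro i
    by_cases h : i = 0
    · rw [h, hlam0]
    · exact (hlam i h).le
  have hρ : ∀ i : Fin (n + 1), ρ i ≠ 0 := by
    intro i
    have hi := hlam_nn i
    have : 0 < ρ i := by simp only [ρ]; positivity
    exact this.ne'
  have hχ : ∀ i j : Fin (n + 1), i ≠ 0 → χ i j ≠ 0 := by
    intro i j hi
    have h1 : 0 < lam i := hlam i hi
    have h2 : 0 ≤ lam j := hlam_nn j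
    have h3 : (0 : ℝ) < 2 * α ^ 2 * (lam i + lam j) := by positivity
    have : 0 < χ i j := by
      simp only [χ]
      nlinarith [sq_nonneg (lam i - lam j)]
    exact this.ne'
  have hχsymm : ∀ i j : Fin (n + 1), χ i j = χ j i := by
    intro i j; simp only [χ]; ring
  have hχ0 : ∀ i : Fin (n + 1), χ i 0 = lam i * ρ i := by
    intro i; simp only [χ, ρ, hlam0]; ring
  -- sum collapsing lemmas
  have ha : ∀ (f : Fin (n + 1) → ℝ) (k : Fin n), (∑ j, f j * A22 k j) = f k.succ := by
    intro f k
    simp [A22, mul_ite]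
  have hb : ∀ (f : Fin (n + 1) → ℝ) (i : Fin n), (∑ j, A22 i j * f j) = f i.succ := by
    intro f i
    simp [A22, ite_mul, eq_comm]
  have hs0 : ∀ f : Fin n → ℝ, (∑ k, f k * A23 0 k) = 0 := by
    intro f
    simp [A23, eq_comm (a := (0 : Fin (n + 1))), Fin.succ_ne_zero]
  have hss : ∀ (f : Fin n → ℝ) (m : Fin n), (∑ k, f k * A23 m.succ k) = -lam m.succ * f m := by
    intro f m
    simp [A23, Fin.succ_inj, mul_ite, mul_comm]
  have ht0 : ∀ f : Fin n → ℝ, (∑ k, A23 0 k * f k) = 0 := by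
    intro f
    simp [A23, eq_comm (a := (0 : Fin (n + 1))), Fin.succ_ne_zero]
  have hts : ∀ (f : Fin n → ℝ) (m : Fin n), (∑ k, A23 m.succ k * f k) = -lam m.succ * f m := by
    intro f m
    simp [A23, Fin.succ_inj, ite_mul]
  have hc : ∀ (f : Fin (n + 1) → ℝ) (j : Fin (n + 1)), (∑ k, f k * A24 j k) = -α * f j := by
    intro f j
    simp [A24, Matrix.one_apply, mul_ite, mul_comm, eq_comm]
  have hd : ∀ (f : Fin (n + 1) → ℝ) (i : Fin (n + 1)), (∑ k, A24 i k * f k) = -α * f i := by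
    intro f i
    simp [A24, Matrix.one_apply, ite_mul, eq_comm]
  refine ⟨?_, ?_, ?_⟩
  · ext i k
    simp only [Matrix.add_apply, Matrix.mul_apply, Matrix.transpose_apply, Matrix.zero_apply]
    rw [ha, hb]
    simp only [S, Matrix.of_apply, if_neg (Fin.succ_ne_zero k), if_neg (Fin.succ_ne_zero i)]
    rw [hWs k.succ i.succ, hχsymm k.succ i.succ]
    ring
  · ext i j
    simp only [Matrix.add_apply, Matrix.mul_apply, Matrix.transpose_apply, Matrix.zero_apply]
    rw [hc, hb]
    induction j using Fin.cases with
    | zero =>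
        rw [hs0]
        simp only [S, R, Matrix.of_apply, Fin.succ_ne_zero, false_and, and_false, and_self, if_false, if_true, ite_true, ite_false]
        rw [hχ0, hlam0]
        have h1 : lam i.succ ≠ 0 := (hlam i.succ (Fin.succ_ne_zero i)).ne'
        have h2 := hρ i.succ
        field_simp
        ring
    | succ m =>
        rw [hss]
        simp only [S, G, R, Matrix.of_apply, Fin.succ_ne_zero, false_and, and_false, and_self, if_false, if_true, ite_true, ite_false]
        have hcne := hχ i.succ m.succ (Fin.succ_ne_zero i)
        field_simp
        ring
  · ext i j
    simp only [Matrix.add_apply, Matrix.mul_apply, Matrix.transpose_apply, Matrix.neg_apply]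
    rw [hc, hd]
    induction i using Fin.cases with
    | zero =>
        rw [ht0]
        induction j using Fin.cases with
        | zero =>
            rw [hs0]
            simp only [R, Matrix.of_apply, and_self, if_true, ite_true]
            field_simp
            ring
        | succ m =>
            rw [hss]
            simp only [S, R, Matrix.of_apply, Fin.succ_ne_zero, false_and, and_false, and_self, if_false, if_true, ite_true, ite_false]
            rw [hχsymm 0 m.succ, hχ0, hWs 0 m.succ, hlam0]
            have h1 : lam m.succ ≠ 0 := (hlam m.succ (Fin.succ_ne_zero m)).ne'
            have h2 := hρ m.succ
            field_simp
            ring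
    | succ k =>
        rw [hts]
        induction j using Fin.cases with
        | zero =>
            rw [hs0]
            simp only [S, R, Matrix.of_apply, Fin.succ_ne_zero, false_and, and_false, and_self, if_false, if_true, ite_true, ite_false]
            rw [hχ0, hlam0]
            have h1 : lam k.succ ≠ 0 := (hlam k.succ (Fin.succ_ne_zero k)).ne'
            have h2 := hρ k.succ
            field_simp
            ring
        | succ m =>
            rw [hss]
            simp only [S, R, Matrix.of_apply, Fin.succ_ne_zero, false_and, and_false, and_self, if_false, if_true, ite_true, ite_false]
            rw [hχsymm m.succ k.succ, hWs m.succ k.succ]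
            have hcne := hχ k.succ m.succ (Fin.succ_ne_zero k)
            field_simp
            ring
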